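/- Expansion of the chromatic polynomial as a weighted sum of flow polynomials of deletions: Let G = (V, E, ε) be a finite multigraph with an orientation (s, t), let q be a positive integer, and let H be any finite abelian group of cardinality q. Then, as an identity in ℚ, χ(G; q) = (−1)^{|E|} · q^{|V| − |E|} · ∑_{F ⊆ E} (1 − q)^{|F|} · χ*(G − F; q), where χ(G; q) is the number of proper q-colorings of G and χ*(G − F; q) is the number of nowhere-zero H-flows of the deletion G − F. -/

import Mathlib

open Finset

/-- The number of proper `q`-colorings of the multigraph given by `ε : E → Sym2 V`. -/
noncomputable def properColoringCount {V E : Type*} (ε : E → Sym2 V) (q : ℕ) : ℕ :=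
  Nat.card {ω : V → Fin q // ∀ e : E, ∀ x y : V, ε e = s(x, y) → ω x ≠ ω y}

/-- The number of nowhere-zero `H`-flows of the multigraph with edge set `S` and
orientation given by source and target maps `s t : E → V`. -/
noncomputable def nzFlowCount {V E : Type*} [Fintype V] [Fintype E] [DecidableEq V]
    (s t : E → V) (S : Finset E) (H : Type*) [AddCommGroup H] [Fintype H] : ℕ :=
  Nat.card {φ : {e : E // e ∈ S} → H //
    (∀ x : V, (∑ e : {e : E // e ∈ S}, if s e.1 = x then φ e else 0) =
              (∑ e : {e : E // e ∈ S}, if t e.1 = x then φ e else 0)) ∧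
    ∀ e, φ e ≠ 0}

set_option linter.unusedSectionVars false

noncomputable section ChromFlowAux
namespace ChromFlowAux

variable {V E : Type*} [Fintype V] [Fintype E] [DecidableEq V] [DecidableEq E]
variable (s t : E → V)
variable (H : Type*) [AddCommGroup H] [Fintype H]

/-- The boundary (divergence) map. -/
def bnd : (E → H) →+ (V → H) :=
  AddMonoidHom.mk'
    (fun φ x => (∑ e, if s e = x then φ e else 0) - (∑ e, if t e = x then φ e else 0))
    (by
      intro φ ψ
      funext x
      have h : ∀ u : E → V, (∑ e, if u e = x then φ e + ψ e else 0)
          = (∑ e, if u e = x then φ e else 0) + (∑ e, if u e = x then ψ e else 0) := by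
        intro u
        rw [← Finset.sum_add_distrib]
        exact Finset.sum_congr rfl fun e _ => by by_cases h : u e = x <;> simp [h]
      simp only [Pi.add_apply]
      rw [h s, h t]
      abel)

/-- extension by zero -/
def extF (A : Finset E) : ({e : E // e ∈ A} → H) →+ (E → H) :=
  AddMonoidHom.mk' (fun φ e => if h : e ∈ A then φ ⟨e, h⟩ else 0)
    (by intro φ ψ; funext e; by_cases h : e ∈ A <;> simp [h])

lemma extF_apply (A : Finset E) (φ : {e : E // e ∈ A} → H) (e : E) :
    extF H A φ e = if h : e ∈ A then φ ⟨e, h⟩ else 0 := rfl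

def DA (A : Finset E) : ({e : E // e ∈ A} → H) →+ (V → H) := (bnd s t H).comp (extF H A)

/-- the relation generated by the edges in `A` -/
def rel (A : Finset E) : V → V → Prop := fun x y => ∃ e ∈ A, s e = x ∧ t e = y

abbrev QA (A : Finset E) := Quot (rel s t A)

instance (A : Finset E) : Finite (QA s t A) := Finite.of_surjective _ Quot.mk_surjective

/-- functions respecting the constraints are functions on the quotient -/
def quotEquiv (A : Finset E) (α : Type*) :
    {ω : V → α // ∀ e ∈ A, ω (s e) = ω (t e)} ≃ (QA s t A → α) where
  toFun ω := Quot.lift ω.1 (by rintro x y ⟨e, he, rfl, rfl⟩; exact ω.2 e he)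
  invFun g := ⟨fun x => g (Quot.mk _ x),
    fun e he => congrArg g (Quot.sound ⟨e, he, rfl, rfl⟩)⟩
  left_inv ω := Subtype.ext rfl
  right_inv g := funext fun κ => by induction κ using Quot.ind; rfl

open Classical in
/-- summing over the classes -/
def SigmaMap (A : Finset E) : (V → H) →+ (QA s t A → H) :=
  AddMonoidHom.mk' (fun ψ κ => ∑ x, if Quot.mk (rel s t A) x = κ then ψ x else 0)
    (by
      intro φ ψ; funext κ
      rw [Pi.add_apply, ← Finset.sum_add_distrib]
      exact Finset.sum_congr rfl fun x _ => by by_cases h : Quot.mk (rel s t A) x = κ <;>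
        simp [h])

open Classical in
lemma SigmaMap_apply (A : Finset E) (ψ : V → H) (κ : QA s t A) :
    SigmaMap s t H A ψ κ
      = ∑ x, if Quot.mk (rel s t A) x = κ then ψ x else 0 := by
  rfl

lemma sigma_surjective (A : Finset E) : Function.Surjective (SigmaMap s t H A) := by
  classical
  intro g
  set σ : QA s t A → V := fun κ => (Quot.exists_rep κ).choose with hσdef
  have hσ : ∀ κ, Quot.mk (rel s t A) (σ κ) = κ := fun κ => (Quot.exists_rep κ).choose_spec
  refine ⟨fun x => if h : ∃ κ, σ κ = x then g (Quot.mk (rel s t A) x) else 0, funext fun κ => ?_⟩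
  rw [SigmaMap_apply]
  rw [Finset.sum_eq_single (σ κ)]
  · rw [if_pos (hσ κ), dif_pos ⟨κ, rfl⟩, hσ κ]
  · intro x _ hx
    by_cases hmk : Quot.mk (rel s t A) x = κ
    · rw [if_pos hmk]
      by_cases hex : ∃ κ', σ κ' = x
      · obtain ⟨κ', rfl⟩ := hex
        exact absurd (by rw [hσ κ'] at hmk; rw [hmk]) hx
      · exact dif_neg hex
    · exact if_neg hmk
  · intro h; exact absurd (Finset.mem_univ _) h

lemma ker_sigma_eq_range (A : Finset E) :
    (SigmaMap s t H A).ker = (DA s t H A).range := by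
  classical
  haveI : Fintype (QA s t A) := Fintype.ofFinite _
  apply le_antisymm
  · -- ker ≤ range
    intro ψ hψ
    rw [AddMonoidHom.mem_ker] at hψ
    set σ : QA s t A → V := fun κ => (Quot.exists_rep κ).choose with hσdef
    have hσ : ∀ κ, Quot.mk (rel s t A) (σ κ) = κ := fun κ => (Quot.exists_rep κ).choose_spec
    have claim : ∀ (x y : V), Relation.EqvGen (rel s t A) x y → ∀ h : H,
        Pi.single x h - Pi.single y h ∈ (DA s t H A).range := by
      intro x y hxy
      induction hxy with
      | rel x y hr =>
        intro h
        obtain ⟨e, he, rfl, rfl⟩ := hr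
        refine ⟨Pi.single (⟨e, he⟩ : {e : E // e ∈ A}) h, ?_⟩
        have hext : extF H A (Pi.single (⟨e, he⟩ : {e : E // e ∈ A}) h) = Pi.single e h := by
          funext e'
          rw [extF_apply]
          by_cases h' : e' ∈ A
          · rw [dif_pos h', Pi.single_apply, Pi.single_apply]
            simp [Subtype.ext_iff]
          · have hne : e' ≠ e := by rintro rfl; exact h' he
            rw [dif_neg h', Pi.single_apply, if_neg hne]
        show bnd s t H (extF H A _) = _
        rw [hext]
        funext x
        show (∑ e', if s e' = x then Pi.single e h e' else 0)
            - (∑ e', if t e' = x then Pi.single e h e' else 0) = _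
        have hs1 : ∀ u : E → V,
            (∑ e', if u e' = x then Pi.single e h e' else 0) = if u e = x then h else 0 := by
          intro u
          rw [Finset.sum_eq_single e]
          · rw [Pi.single_eq_same]
          · intro e' _ hne; rw [Pi.single_eq_of_ne hne, ite_self]
          · intro hmem; exact absurd (Finset.mem_univ _) hmem
        rw [hs1, hs1]
        simp [Pi.single_apply, eq_comm]
      | refl x => intro h; rw [sub_self]; exact zero_mem _
      | symm x y _ ih =>
        intro h
        have := neg_mem (ih h)
        rwa [neg_sub] at this
      | trans x y z _ _ ih1 ih2 =>
        intro h
        have := add_mem (ih1 h) (ih2 h)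
        rwa [sub_add_sub_cancel] at this
    have single_sum : ∀ (v : V) (F : V → H),
        ∑ x, (Pi.single v (F x) : V → H) = (Pi.single v (∑ x, F x) : V → H) := by
      intro v F
      funext w
      rw [Finset.sum_apply]
      by_cases hw : w = v
      · subst hw; simp [Pi.single_eq_same]
      · simp [Pi.single_eq_of_ne hw]
    have h2 : ∑ x, (Pi.single (σ (Quot.mk (rel s t A) x)) (ψ x) : V → H) = 0 := by
      have step1 : ∀ x : V, (Pi.single (σ (Quot.mk (rel s t A) x)) (ψ x) : V → H)
          = ∑ κ, if Quot.mk (rel s t A) x = κ then (Pi.single (σ κ) (ψ x) : V → H) else 0 := by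
        intro x
        rw [Finset.sum_ite_eq, if_pos (Finset.mem_univ _)]
      calc ∑ x, (Pi.single (σ (Quot.mk (rel s t A) x)) (ψ x) : V → H)
          = ∑ x, ∑ κ, if Quot.mk (rel s t A) x = κ then (Pi.single (σ κ) (ψ x) : V → H) else 0 :=
            Finset.sum_congr rfl (fun x _ => step1 x)
        _ = ∑ κ, ∑ x, if Quot.mk (rel s t A) x = κ then (Pi.single (σ κ) (ψ x) : V → H) else 0 :=
            Finset.sum_comm
        _ = ∑ κ : QA s t A, (Pi.single (σ κ) (SigmaMap s t H A ψ κ) : V → H) := by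
            refine Finset.sum_congr rfl fun κ _ => ?_
            rw [SigmaMap_apply, ← single_sum]
            refine Finset.sum_congr rfl fun x _ => ?_
            by_cases h : Quot.mk (rel s t A) x = κ <;> simp [h]
        _ = 0 := by rw [hψ]; simp
    have h3 : ψ = ∑ x, (Pi.single x (ψ x) - Pi.single (σ (Quot.mk (rel s t A) x)) (ψ x)) := by
      rw [Finset.sum_sub_distrib, h2, sub_zero, Finset.univ_sum_single]
    rw [h3]
    exact AddSubgroup.sum_mem _ (fun x _ => claim x (σ (Quot.mk (rel s t A) x))
      (Quot.eqvGen_exact (hσ (Quot.mk (rel s t A) x)).symm) (ψ x))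
  · -- range ≤ ker
    rintro _ ⟨φ, rfl⟩
    rw [AddMonoidHom.mem_ker]
    funext κ
    have hsupp : ∀ e ∉ A, extF H A φ e = 0 := fun e he => dif_neg he
    show SigmaMap s t H A (bnd s t H (extF H A φ)) κ = 0
    set χ : E → H := extF H A φ with hχ
    rw [SigmaMap_apply]
    have hb : ∀ x : V, bnd s t H χ x
        = (∑ e, if s e = x then χ e else 0) - (∑ e, if t e = x then χ e else 0) := fun x => rfl
    have inner : ∀ (u : E → V) (e : E),
        (∑ x, if Quot.mk (rel s t A) x = κ then (if u e = x then χ e else 0) else 0)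
          = (if Quot.mk (rel s t A) (u e) = κ then χ e else 0) := by
      intro u e
      rw [Finset.sum_eq_single (u e)]
      · simp
      · intro x _ hx
        by_cases hmk : Quot.mk (rel s t A) x = κ
        · rw [if_pos hmk, if_neg (fun hh : u e = x => hx hh.symm)]
        · rw [if_neg hmk]
      · intro h; exact absurd (Finset.mem_univ _) h
    calc (∑ x, if Quot.mk (rel s t A) x = κ then bnd s t H χ x else 0)
        = ∑ x, ((∑ e, if Quot.mk (rel s t A) x = κ then (if s e = x then χ e else 0) else 0)
              - (∑ e, if Quot.mk (rel s t A) x = κ then (if t e = x then χ e else 0) else 0)) := by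
          refine Finset.sum_congr rfl fun x _ => ?_
          rw [hb]
          by_cases h : Quot.mk (rel s t A) x = κ <;> simp [h]
      _ = (∑ x, ∑ e, if Quot.mk (rel s t A) x = κ then (if s e = x then χ e else 0) else 0)
            - (∑ x, ∑ e, if Quot.mk (rel s t A) x = κ then (if t e = x then χ e else 0) else 0) :=
          Finset.sum_sub_distrib _ _
      _ = (∑ e, ∑ x, if Quot.mk (rel s t A) x = κ then (if s e = x then χ e else 0) else 0)
            - (∑ e, ∑ x, if Quot.mk (rel s t A) x = κ then (if t e = x then χ e else 0) else 0) := by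
          rw [Finset.sum_comm (f := fun x e => if Quot.mk (rel s t A) x = κ then (if s e = x then χ e else 0) else 0),
            Finset.sum_comm (f := fun x e => if Quot.mk (rel s t A) x = κ then (if t e = x then χ e else 0) else 0)]
      _ = ∑ e, ((if Quot.mk (rel s t A) (s e) = κ then χ e else 0)
              - (if Quot.mk (rel s t A) (t e) = κ then χ e else 0)) := by
          rw [← Finset.sum_sub_distrib]
          exact Finset.sum_congr rfl fun e _ => by rw [inner s e, inner t e]
      _ = 0 := by
          refine Finset.sum_eq_zero fun e _ => ?_
          by_cases he : e ∈ A
          · rw [Quot.sound ⟨e, he, rfl, rfl⟩, sub_self]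
          · rw [hsupp e he]; simp

lemma bnd_apply (φ : E → H) (x : V) :
    bnd s t H φ x
      = (∑ e, if s e = x then φ e else 0) - (∑ e, if t e = x then φ e else 0) := rfl

/-- flows with support in `A` are the kernel of `DA`. -/
def kerEquiv (A : Finset E) :
    (DA s t H A).ker ≃ {φ : E → H // bnd s t H φ = 0 ∧ ∀ e ∉ A, φ e = 0} where
  toFun ψ := ⟨extF H A ψ.1, AddMonoidHom.mem_ker.mp ψ.2, fun e he => dif_neg he⟩
  invFun φ := ⟨fun e => φ.1 e.1, by
    rw [AddMonoidHom.mem_ker]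
    have hre : extF H A (fun e => φ.1 e.1) = φ.1 := by
      funext e
      rw [extF_apply]
      by_cases h : e ∈ A
      · rw [dif_pos h]
      · rw [dif_neg h]; exact (φ.2.2 e h).symm
    show bnd s t H (extF H A _) = 0
    rw [hre]; exact φ.2.1⟩
  left_inv ψ := Subtype.ext (funext fun e => dif_pos e.2)
  right_inv φ := Subtype.ext (funext fun e => by
    show extF H A (fun e' => φ.1 e'.1) e = φ.1 e
    by_cases h : e ∈ A
    · exact dif_pos h
    · rw [extF_apply, dif_neg h]; exact (φ.2.2 e h).symm)

lemma key_count (A : Finset E) (q : ℕ) (hH : Fintype.card H = q) :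
    Nat.card {ω : V → Fin q // ∀ e ∈ A, ω (s e) = ω (t e)} * q ^ A.card
      = Nat.card {φ : E → H // bnd s t H φ = 0 ∧ ∀ e ∉ A, φ e = 0}
          * q ^ Fintype.card V := by
  classical
  have hHq : Nat.card H = q := by rw [Nat.card_eq_fintype_card, hH]
  have h1 : Nat.card {ω : V → Fin q // ∀ e ∈ A, ω (s e) = ω (t e)}
      = q ^ Nat.card (QA s t A) := by
    rw [Nat.card_congr (quotEquiv s t A (Fin q)), Nat.card_fun,
      Nat.card_eq_fintype_card (α := Fin q), Fintype.card_fin]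
  have hdom : Nat.card ({e : E // e ∈ A} → H) = q ^ A.card := by
    rw [Nat.card_fun, hHq, Nat.card_eq_fintype_card, Fintype.card_coe]
  have hQ : Nat.card (QA s t A → H) = q ^ Nat.card (QA s t A) := by
    rw [Nat.card_fun, hHq]
  have hDA : q ^ A.card = Nat.card (DA s t H A).range * Nat.card (DA s t H A).ker := by
    rw [← hdom, AddSubgroup.card_eq_card_quotient_mul_card_addSubgroup (DA s t H A).ker]
    congr 1
    exact Nat.card_congr (QuotientAddGroup.quotientKerEquivRange (DA s t H A)).toEquiv
  have hSig : q ^ Fintype.card V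
      = q ^ Nat.card (QA s t A) * Nat.card (DA s t H A).range := by
    have hcard : Nat.card (V → H) = q ^ Fintype.card V := by
      rw [Nat.card_fun, hHq, Nat.card_eq_fintype_card]
    rw [← hcard, AddSubgroup.card_eq_card_quotient_mul_card_addSubgroup (SigmaMap s t H A).ker]
    congr 1
    · rw [← hQ]
      exact Nat.card_congr
        (QuotientAddGroup.quotientKerEquivOfSurjective _ (sigma_surjective s t H A)).toEquiv
    · rw [ker_sigma_eq_range]
  rw [h1, Nat.card_congr (kerEquiv s t H A).symm, hDA, hSig]
  ring

lemma bridge (B : Finset E) (u : E → V) (x : V) (ψ : {e : E // e ∈ B} → H) :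
    (∑ e : E, if u e = x then extF H B ψ e else 0)
      = ∑ e : {e : E // e ∈ B}, if u e.1 = x then ψ e else 0 := by
  classical
  symm
  calc (∑ e : {e : E // e ∈ B}, if u e.1 = x then ψ e else 0)
      = ∑ e : {e : E // e ∈ B}, (if u e.1 = x then extF H B ψ e.1 else 0) :=
        Finset.sum_congr rfl fun e _ => by rw [extF_apply, dif_pos e.2]
    _ = ∑ e ∈ B.attach, (if u e.1 = x then extF H B ψ e.1 else 0) := by
        rw [Finset.univ_eq_attach]
    _ = ∑ e ∈ B, (if u e = x then extF H B ψ e else 0) :=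
        Finset.sum_attach B (fun e => if u e = x then extF H B ψ e else 0)
    _ = ∑ e : E, if u e = x then extF H B ψ e else 0 :=
        Finset.sum_subset (Finset.subset_univ B)
          (fun e _ he => by rw [extF_apply, dif_neg he, ite_self])

/-- nowhere-zero flows on `B` correspond to global flows with support exactly `B`. -/
def nzEquiv (B : Finset E) :
    {φ : {e : E // e ∈ B} → H //
      (∀ x : V, (∑ e : {e : E // e ∈ B}, if s e.1 = x then φ e else 0) =
                (∑ e : {e : E // e ∈ B}, if t e.1 = x then φ e else 0)) ∧
      ∀ e, φ e ≠ 0}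
    ≃ {φ : E → H // bnd s t H φ = 0 ∧ ∀ e, φ e ≠ 0 ↔ e ∈ B} where
  toFun ψ := ⟨extF H B ψ.1, by
    constructor
    · funext x
      rw [bnd_apply, bridge H B s x ψ.1, bridge H B t x ψ.1, ψ.2.1 x, sub_self, Pi.zero_apply]
    · intro e
      rw [extF_apply]
      by_cases h : e ∈ B
      · rw [dif_pos h]; exact iff_of_true (ψ.2.2 _) h
      · rw [dif_neg h]; simp [h]⟩
  invFun φ := ⟨fun e => φ.1 e.1, by
    have hre : extF H B (fun e => φ.1 e.1) = φ.1 := by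
      funext e
      rw [extF_apply]
      by_cases h : e ∈ B
      · rw [dif_pos h]
      · rw [dif_neg h]
        have h0 : φ.1 e = 0 := by
          by_contra hne
          exact h ((φ.2.2 e).mp hne)
        exact h0.symm
    constructor
    · intro x
      have hsx := bridge H B s x (fun e => φ.1 e.1)
      have htx := bridge H B t x (fun e => φ.1 e.1)
      rw [hre] at hsx htx
      rw [← hsx, ← htx]
      have h1 := congrFun φ.2.1 x
      rw [bnd_apply, Pi.zero_apply, sub_eq_zero] at h1
      exact h1
    · intro e
      exact (φ.2.2 e.1).mpr e.2⟩
  left_inv ψ := Subtype.ext (funext fun e => dif_pos e.2)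
  right_inv φ := Subtype.ext (funext fun e => by
    show extF H B (fun e' => φ.1 e'.1) e = φ.1 e
    by_cases h : e ∈ B
    · exact dif_pos h
    · rw [extF_apply, dif_neg h]
      have h0 : φ.1 e = 0 := by
        by_contra hne
        exact h ((φ.2.2 e).mp hne)
      exact h0.symm)

lemma nz_eq (B : Finset E) :
    nzFlowCount s t B H
      = Nat.card {φ : E → H // bnd s t H φ = 0 ∧ ∀ e, φ e ≠ 0 ↔ e ∈ B} :=
  Nat.card_congr (nzEquiv s t H B)

lemma flow_decomp (A : Finset E) :
    Nat.card {φ : E → H // bnd s t H φ = 0 ∧ ∀ e ∉ A, φ e = 0}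
      = ∑ B ∈ A.powerset,
          Nat.card {φ : E → H // bnd s t H φ = 0 ∧ ∀ e, φ e ≠ 0 ↔ e ∈ B} := by
  classical
  rw [Nat.card_eq_fintype_card, Fintype.card_subtype]
  rw [Finset.card_eq_sum_card_fiberwise
    (f := fun φ : E → H => univ.filter (fun e => φ e ≠ 0)) (t := A.powerset)
    (fun φ hφ => by
      simp only [Finset.mem_coe] at hφ ⊢
      rw [Finset.mem_filter] at hφ
      rw [Finset.mem_powerset]
      intro e he
      rw [Finset.mem_filter] at he
      by_contra hA
      exact he.2 (hφ.2.2 e hA))]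
  refine Finset.sum_congr rfl fun B hB => ?_
  rw [Finset.mem_powerset] at hB
  rw [Nat.card_eq_fintype_card, Fintype.card_subtype]
  congr 1
  ext φ
  simp only [Finset.mem_filter, Finset.mem_univ, true_and]
  constructor
  · rintro ⟨⟨hk, hsupp⟩, hfib⟩
    refine ⟨hk, fun e => ?_⟩
    rw [← hfib]
    simp
  · rintro ⟨hk, hiff⟩
    refine ⟨⟨hk, fun e he => ?_⟩, ?_⟩
    · by_contra hne
      exact he (hB ((hiff e).mp hne))
    · ext e
      simp [hiff e]

lemma flow_decomp' (A : Finset E) :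
    (Nat.card {φ : E → H // bnd s t H φ = 0 ∧ ∀ e ∉ A, φ e = 0} : ℚ)
      = ∑ B ∈ A.powerset, (nzFlowCount s t B H : ℚ) := by
  rw [flow_decomp]
  push_cast
  exact Finset.sum_congr rfl fun B _ => by rw [nz_eq]

lemma sum_pow_card {α : Type*} [DecidableEq α] (S : Finset α) (x : ℚ) :
    ∑ C ∈ S.powerset, x ^ C.card = (x + 1) ^ S.card := by
  calc ∑ C ∈ S.powerset, x ^ C.card
      = ∑ C ∈ S.powerset, (∏ _e ∈ C, x) * ∏ _e ∈ S \ C, (1 : ℚ) := by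
        refine Finset.sum_congr rfl fun C _ => ?_
        rw [Finset.prod_const, Finset.prod_const, one_pow, mul_one]
    _ = ∏ _e ∈ S, (x + 1) := (Finset.prod_add _ _ S).symm
    _ = (x + 1) ^ S.card := Finset.prod_const _

lemma geo (B : Finset E) (x : ℚ) :
    ∑ A ∈ (univ : Finset E).powerset.filter (fun A => B ⊆ A), x ^ A.card
      = x ^ B.card * (x + 1) ^ (Fintype.card E - B.card) := by
  classical
  rw [← Finset.card_compl, ← sum_pow_card Bᶜ x, Finset.mul_sum]
  refine Finset.sum_nbij' (fun A => A \ B) (fun C => B ∪ C) ?_ ?_ ?_ ?_ ?_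
  · intro A hA
    rw [Finset.mem_filter, Finset.mem_powerset] at hA
    rw [Finset.mem_powerset]
    intro e he
    rw [Finset.mem_sdiff] at he
    rw [Finset.mem_compl]
    exact he.2
  · intro C hC
    rw [Finset.mem_filter, Finset.mem_powerset]
    exact ⟨Finset.subset_univ _, Finset.subset_union_left⟩
  · intro A hA
    rw [Finset.mem_filter] at hA
    exact Finset.union_sdiff_of_subset hA.2
  · intro C hC
    rw [Finset.mem_powerset] at hC
    refine Finset.union_sdiff_cancel_left ?_
    exact Finset.disjoint_left.mpr fun {e} hB hCe => (Finset.mem_compl.mp (hC hCe)) hB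
  · intro A hA
    rw [Finset.mem_filter] at hA
    rw [← pow_add]
    show x ^ A.card = x ^ (B.card + (A \ B).card)
    congr 1
    have := Finset.card_sdiff_add_card_eq_card hA.2
    omega

lemma chrom_ie (ε : E → Sym2 V) (hst : ∀ e, ε e = s(s e, t e)) (q : ℕ) :
    (properColoringCount ε q : ℚ)
      = ∑ A ∈ (univ : Finset E).powerset, (-1) ^ A.card
          * (Nat.card {ω : V → Fin q // ∀ e ∈ A, ω (s e) = ω (t e)} : ℚ) := by
  classical
  have hiff : ∀ ω : V → Fin q,
      (∀ e : E, ∀ x y : V, ε e = s(x, y) → ω x ≠ ω y) ↔ ∀ e, ω (s e) ≠ ω (t e) := by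
    intro ω
    constructor
    · intro h e; exact h e _ _ (hst e)
    · intro h e x y hxy
      rw [hst e, Sym2.eq_iff] at hxy
      rcases hxy with ⟨h1, h2⟩ | ⟨h1, h2⟩
      · subst h1; subst h2; exact h e
      · subst h1; subst h2; exact (h e).symm
  have h0 : properColoringCount ε q
      = Nat.card {ω : V → Fin q // ∀ e, ω (s e) ≠ ω (t e)} :=
    Nat.card_congr (Equiv.subtypeEquivRight hiff)
  rw [h0, Nat.card_eq_fintype_card, Fintype.card_subtype, ← Finset.sum_boole]
  calc (∑ ω : V → Fin q, if (∀ e, ω (s e) ≠ ω (t e)) then (1 : ℚ) else 0)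
      = ∑ ω : V → Fin q, ∏ e : E,
          (-(if ω (s e) = ω (t e) then (1 : ℚ) else 0) + 1) := by
        refine Finset.sum_congr rfl fun ω _ => ?_
        have he : ∀ e : E, (-(if ω (s e) = ω (t e) then (1 : ℚ) else 0) + 1)
            = (if ω (s e) ≠ ω (t e) then (1 : ℚ) else 0) := by
          intro e; by_cases h : ω (s e) = ω (t e) <;> simp [h]
        rw [Finset.prod_congr rfl (fun e _ => he e), Fintype.prod_boole]
    _ = ∑ ω : V → Fin q, ∑ A ∈ (univ : Finset E).powerset,
          (∏ e ∈ A, -(if ω (s e) = ω (t e) then (1 : ℚ) else 0)) * ∏ _e ∈ univ \ A, (1 : ℚ) :=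
        Finset.sum_congr rfl fun ω _ => Finset.prod_add _ _ _
    _ = ∑ A ∈ (univ : Finset E).powerset, ∑ ω : V → Fin q,
          (∏ e ∈ A, -(if ω (s e) = ω (t e) then (1 : ℚ) else 0)) := by
        rw [Finset.sum_comm]
        exact Finset.sum_congr rfl fun A _ => Finset.sum_congr rfl fun ω _ => by
          rw [Finset.prod_const_one, mul_one]
    _ = ∑ A ∈ (univ : Finset E).powerset, (-1) ^ A.card
          * (Nat.card {ω : V → Fin q // ∀ e ∈ A, ω (s e) = ω (t e)} : ℚ) := by
        refine Finset.sum_congr rfl fun A _ => ?_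
        have hprod : ∀ ω : V → Fin q,
            (∏ e ∈ A, -(if ω (s e) = ω (t e) then (1 : ℚ) else 0))
              = (-1 : ℚ) ^ A.card * (if (∀ e ∈ A, ω (s e) = ω (t e)) then (1 : ℚ) else 0) := by
          intro ω
          calc ∏ e ∈ A, -(if ω (s e) = ω (t e) then (1 : ℚ) else 0)
              = ∏ e ∈ A, ((-1) * (if ω (s e) = ω (t e) then (1 : ℚ) else 0)) :=
                Finset.prod_congr rfl fun e _ => by ring
            _ = ((-1 : ℚ) ^ A.card) * ∏ e ∈ A, (if ω (s e) = ω (t e) then (1 : ℚ) else 0) := by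
                rw [Finset.prod_mul_distrib, Finset.prod_const]
            _ = (-1 : ℚ) ^ A.card * (if (∀ e ∈ A, ω (s e) = ω (t e)) then (1 : ℚ) else 0) := by
                rw [Finset.prod_boole]
                congr 1
                by_cases h : ∀ e ∈ A, ω (s e) = ω (t e)
                · rw [if_pos h, if_pos h]
                · rw [if_neg h, if_neg h]
        rw [Finset.sum_congr rfl (fun ω _ => hprod ω), ← Finset.mul_sum, Finset.sum_boole]
        congr 1
        rw [Nat.card_eq_fintype_card, Fintype.card_subtype]

end ChromFlowAux
end ChromFlowAux

/-- The chromatic polynomial as a weighted sum of flow polynomials of deletions: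
`χ(G;q) = (-1)^{|E|} q^{|V|-|E|} ∑_{F ⊆ E} (1-q)^{|F|} χ*(G-F;q)`, where `(s,t)` is an
orientation of `G` and `H` is any finite abelian group of cardinality `q`. -/
theorem chromatic_expansion_flows {V E : Type*} [Fintype V] [Fintype E]
    [DecidableEq V] [DecidableEq E]
    (ε : E → Sym2 V) (s t : E → V) (hst : ∀ e, ε e = s(s e, t e))
    (q : ℕ) (hq : 0 < q) (H : Type*) [AddCommGroup H] [Fintype H]
    (hH : Fintype.card H = q) :
    (properColoringCount ε q : ℚ) =
      (-1) ^ (Fintype.card E) * (q : ℚ) ^ ((Fintype.card V : ℤ) - (Fintype.card E : ℤ)) *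
        ∑ F ∈ Finset.univ.powerset,
          (1 - (q : ℚ)) ^ F.card * (nzFlowCount s t (Finset.univ \ F) H : ℚ) := by
  classical
  have hq0 : (q : ℚ) ≠ 0 := Nat.cast_ne_zero.mpr hq.ne'
  have hcol : ∀ A : Finset E,
      (Nat.card {ω : V → Fin q // ∀ e ∈ A, ω (s e) = ω (t e)} : ℚ)
        = (Nat.card {φ : E → H // ChromFlowAux.bnd s t H φ = 0 ∧ ∀ e ∉ A, φ e = 0} : ℚ)
            * (q : ℚ) ^ (Fintype.card V) / (q : ℚ) ^ A.card := by
    intro A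
    have h := ChromFlowAux.key_count s t H A q hH
    rw [eq_div_iff (pow_ne_zero _ hq0)]
    exact_mod_cast h
  rw [ChromFlowAux.chrom_ie s t ε hst q]
  calc ∑ A ∈ (univ : Finset E).powerset, (-1) ^ A.card
          * (Nat.card {ω : V → Fin q // ∀ e ∈ A, ω (s e) = ω (t e)} : ℚ)
      = ∑ A ∈ (univ : Finset E).powerset, ∑ B ∈ A.powerset,
          ((-1 : ℚ) ^ A.card * (q : ℚ) ^ Fintype.card V / (q : ℚ) ^ A.card
            * (nzFlowCount s t B H : ℚ)) := by
        refine Finset.sum_congr rfl fun A _ => ?_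
        rw [hcol A, ChromFlowAux.flow_decomp' s t H A]
        rw [Finset.sum_mul, Finset.sum_div, Finset.mul_sum]
        exact Finset.sum_congr rfl fun B _ => by ring
    _ = ∑ B ∈ (univ : Finset E).powerset,
          ∑ A ∈ (univ : Finset E).powerset.filter (fun A => B ⊆ A),
          ((-1 : ℚ) ^ A.card * (q : ℚ) ^ Fintype.card V / (q : ℚ) ^ A.card
            * (nzFlowCount s t B H : ℚ)) := by
        refine Finset.sum_comm' ?_
        intro A B
        simp only [Finset.mem_powerset, Finset.mem_filter, Finset.subset_univ, true_and,
          and_true, and_comm]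
    _ = ∑ B ∈ (univ : Finset E).powerset,
          ((q : ℚ) ^ Fintype.card V
            * ((-(q : ℚ)⁻¹) ^ B.card * ((-(q : ℚ)⁻¹) + 1) ^ (Fintype.card E - B.card)))
          * (nzFlowCount s t B H : ℚ) := by
        refine Finset.sum_congr rfl fun B _ => ?_
        rw [← Finset.sum_mul]
        congr 1
        calc ∑ A ∈ (univ : Finset E).powerset.filter (fun A => B ⊆ A),
              ((-1 : ℚ) ^ A.card * (q : ℚ) ^ Fintype.card V / (q : ℚ) ^ A.card)
            = ∑ A ∈ (univ : Finset E).powerset.filter (fun A => B ⊆ A),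
              ((q : ℚ) ^ Fintype.card V * (-(q : ℚ)⁻¹) ^ A.card) := by
              refine Finset.sum_congr rfl fun A _ => ?_
              rw [neg_pow ((q : ℚ)⁻¹), inv_pow, div_eq_mul_inv]
              ring
          _ = (q : ℚ) ^ Fintype.card V
              * ∑ A ∈ (univ : Finset E).powerset.filter (fun A => B ⊆ A),
                  (-(q : ℚ)⁻¹) ^ A.card := by rw [Finset.mul_sum]
          _ = (q : ℚ) ^ Fintype.card V
              * ((-(q : ℚ)⁻¹) ^ B.card * ((-(q : ℚ)⁻¹) + 1) ^ (Fintype.card E - B.card)) := by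
              rw [ChromFlowAux.geo]
    _ = ∑ B ∈ (univ : Finset E).powerset,
          (-1 : ℚ) ^ (Fintype.card E)
            * (q : ℚ) ^ ((Fintype.card V : ℤ) - (Fintype.card E : ℤ))
            * ((1 - (q : ℚ)) ^ (Fintype.card E - B.card) * (nzFlowCount s t B H : ℚ)) := by
        refine Finset.sum_congr rfl fun B _ => ?_
        have hble : B.card ≤ Fintype.card E := Finset.card_le_univ B
        have hz : (q : ℚ) ^ ((Fintype.card V : ℤ) - (Fintype.card E : ℤ))
            = (q : ℚ) ^ (Fintype.card V) * ((q : ℚ) ^ (Fintype.card E))⁻¹ := by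
          rw [zpow_sub₀ hq0, zpow_natCast, zpow_natCast, div_eq_mul_inv]
        obtain ⟨k, hk⟩ : ∃ k, Fintype.card E = B.card + k := ⟨_, (Nat.add_sub_cancel' hble).symm⟩
        have h1 : (-(q : ℚ)⁻¹ + 1) = (-1) * (1 - (q : ℚ)) * (q : ℚ)⁻¹ := by
          field_simp
          ring
        rw [hz, hk]
        simp only [Nat.add_sub_cancel_left]
        rw [h1, mul_pow, mul_pow, neg_pow ((q : ℚ)⁻¹), ← inv_pow]
        ring
    _ = (-1) ^ (Fintype.card E) * (q : ℚ) ^ ((Fintype.card V : ℤ) - (Fintype.card E : ℤ)) *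
          ∑ F ∈ Finset.univ.powerset,
            (1 - (q : ℚ)) ^ F.card * (nzFlowCount s t (Finset.univ \ F) H : ℚ) := by
        rw [Finset.mul_sum]
        refine Finset.sum_nbij' compl compl ?_ ?_ ?_ ?_ ?_
        · intro B _; exact Finset.mem_powerset.mpr (Finset.subset_univ _)
        · intro F _; exact Finset.mem_powerset.mpr (Finset.subset_univ _)
        · intro B _; exact compl_compl B
        · intro F _; exact compl_compl F
        · intro B _
          have h2 : (univ : Finset E) \ Bᶜ = B := by
            ext e; simp
          rw [h2, Finset.card_compl]
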